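/- arXiv:2512.05962 — 10 statements merged into one kernel-verified Lean document; each statement's English description precedes it below -/
import Mathlib

section
/- Let Y be a finite type, let n be a natural number, and let π : ℝⁿ → Y → ℝ be such that for every θ ∈ ℝⁿ, π θ is a strictly positive probability mass function on Y (π θ y > 0 for all y and ∑_y π θ y = 1), and for each y the map θ ↦ π θ y is differentiable on ℝⁿ. Let π_ref be a probability mass function on Y with π_ref y > 0 for all y, let v : Y → ℝ, let β > 0, and define Z_β := ∑_y π_ref(y)·exp(v(y)/β) and p_β(y) := π_ref(y)·exp(v(y)/β)/Z_β. Then for every θ, the gradient with respect to θ of the reverse Kullback–Leibler divergence θ ↦ ∑_y π θ y · log(π θ y / p_β(y)) equals −∑_y (v(y)/β − log(π θ y / π_ref(y))) · ∇_θ(π θ y); equivalently, it equals −(1/β) times the gradient of θ ↦ ∑_y π θ y · (v(y) − β·log(π θ y / π_ref(y))). -/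
/-- Gradient of the reverse KL divergence to the Gibbs target `p_β`
equals minus the sum of the RLVR pseudo-rewards times the gradients of the policy
probabilities; equivalently it is `-(1/β)` times the gradient of the expected
regularized reward. -/
theorem stmt_0 {Y : Type*} [Fintype Y] (n : ℕ)
    (pol : (Fin n → ℝ) → Y → ℝ)
    (hpos : ∀ θ y, 0 < pol θ y)
    (hsum : ∀ θ, ∑ y, pol θ y = 1)
    (hdiff : ∀ y, Differentiable ℝ (fun θ => pol θ y))
    (pref : Y → ℝ) (hrefpos : ∀ y, 0 < pref y) (hrefsum : ∑ y, pref y = 1)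
    (v : Y → ℝ) (β : ℝ) (hβ : 0 < β)
    (Zβ : ℝ) (hZβ : Zβ = ∑ y, pref y * Real.exp (v y / β))
    (pβ : Y → ℝ) (hpβ : ∀ y, pβ y = pref y * Real.exp (v y / β) / Zβ)
    (θ : Fin n → ℝ) :
    fderiv ℝ (fun θ' => ∑ y, pol θ' y * Real.log (pol θ' y / pβ y)) θ
      = -∑ y, (v y / β - Real.log (pol θ y / pref y)) • fderiv ℝ (fun θ' => pol θ' y) θ
    ∧
    fderiv ℝ (fun θ' => ∑ y, pol θ' y * Real.log (pol θ' y / pβ y)) θ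
      = -((1 / β) •
          fderiv ℝ (fun θ' => ∑ y, pol θ' y * (v y - β * Real.log (pol θ' y / pref y))) θ) := by
  classical
  have hY : Nonempty Y := by
    rcases isEmpty_or_nonempty Y with h | h
    · exfalso; have := hsum θ; simp at this
    · exact h
  have hZ : 0 < Zβ := by
    rw [hZβ]
    exact Finset.sum_pos (fun y _ => mul_pos (hrefpos y) (Real.exp_pos _)) Finset.univ_nonempty
  have hpβpos : ∀ y, 0 < pβ y := fun y => by
    rw [hpβ y]; exact div_pos (mul_pos (hrefpos y) (Real.exp_pos _)) hZ
  set D : Y → (Fin n → ℝ) →L[ℝ] ℝ := fun y => fderiv ℝ (fun θ' => pol θ' y) θ with hDdef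
  have hD : ∀ y, HasFDerivAt (fun θ' => pol θ' y) (D y) θ := fun y => (hdiff y θ).hasFDerivAt
  have hsumD : ∑ y, D y = 0 := by
    have h1 : HasFDerivAt (fun θ' : Fin n → ℝ => ∑ y, pol θ' y) (∑ y, D y) θ :=
      HasFDerivAt.fun_sum (fun y _ => hD y)
    have h2 : (fun θ' : Fin n → ℝ => ∑ y, pol θ' y) = fun _ => (1 : ℝ) := funext hsum
    rw [h2] at h1
    exact h1.unique (hasFDerivAt_const 1 θ)
  have halg : ∀ (a : Y → ℝ) (K : ℝ), ∑ y, (a y + K) • D y = ∑ y, a y • D y := by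
    intro a K
    have h1 : ∑ y, (a y + K) • D y = ∑ y, (a y • D y + K • D y) := by
      apply Finset.sum_congr rfl; intro y _; rw [add_smul]
    rw [h1, Finset.sum_add_distrib, ← Finset.smul_sum, hsumD, smul_zero, add_zero]
  -- derivative of a generic term pol * log (pol / c)
  have hterm : ∀ (c : ℝ), 0 < c → ∀ y, HasFDerivAt
      (fun θ' => pol θ' y * Real.log (pol θ' y / c))
      ((Real.log (pol θ y / c) + 1) • D y) θ := by
    intro c hc y
    have hx := hpos θ y
    have hφ : HasDerivAt (fun x : ℝ => x * (Real.log x - Real.log c))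
        (1 * (Real.log (pol θ y) - Real.log c) + pol θ y * (pol θ y)⁻¹) (pol θ y) :=
      (hasDerivAt_id _).mul ((Real.hasDerivAt_log hx.ne').sub_const _)
    have heq : (fun x : ℝ => x * (Real.log x - Real.log c))
        = fun x => x * Real.log (x / c) := by
      funext x
      rcases eq_or_ne x 0 with h | h
      · simp [h]
      · rw [Real.log_div h hc.ne']
    rw [heq] at hφ
    have hcoef : 1 * (Real.log (pol θ y) - Real.log c) + pol θ y * (pol θ y)⁻¹
        = Real.log (pol θ y / c) + 1 := by
      rw [Real.log_div hx.ne' hc.ne', mul_inv_cancel₀ hx.ne']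
      ring
    rw [hcoef] at hφ
    exact hφ.comp_hasFDerivAt θ (hD y)
  have hf : HasFDerivAt (fun θ' => ∑ y, pol θ' y * Real.log (pol θ' y / pβ y))
      (∑ y, (Real.log (pol θ y / pβ y) + 1) • D y) θ :=
    HasFDerivAt.fun_sum (fun y _ => hterm (pβ y) (hpβpos y) y)
  have hlog : ∀ y, Real.log (pol θ y / pβ y) + 1
      = -(v y / β - Real.log (pol θ y / pref y)) + (Real.log Zβ + 1) := by
    intro y
    rw [Real.log_div (hpos θ y).ne' (hpβpos y).ne', hpβ y,
        Real.log_div (mul_pos (hrefpos y) (Real.exp_pos _)).ne' hZ.ne',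
        Real.log_mul (hrefpos y).ne' (Real.exp_pos _).ne', Real.log_exp,
        Real.log_div (hpos θ y).ne' (hrefpos y).ne']
    ring
  have hfirst : fderiv ℝ (fun θ' => ∑ y, pol θ' y * Real.log (pol θ' y / pβ y)) θ
      = -∑ y, (v y / β - Real.log (pol θ y / pref y)) • D y := by
    rw [hf.fderiv]
    calc ∑ y, (Real.log (pol θ y / pβ y) + 1) • D y
        = ∑ y, (-(v y / β - Real.log (pol θ y / pref y)) + (Real.log Zβ + 1)) • D y := by
          apply Finset.sum_congr rfl; intro y _; rw [hlog y]
      _ = ∑ y, (-(v y / β - Real.log (pol θ y / pref y))) • D y := halg _ _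
      _ = -∑ y, (v y / β - Real.log (pol θ y / pref y)) • D y := by
          rw [← Finset.sum_neg_distrib]
          apply Finset.sum_congr rfl; intro y _; exact neg_smul (v y / β - Real.log (pol θ y / pref y)) (D y)
  -- derivative of the regularized reward
  have hterm2 : ∀ y, HasFDerivAt
      (fun θ' => pol θ' y * (v y - β * Real.log (pol θ' y / pref y)))
      ((v y - β * Real.log (pol θ y / pref y) - β) • D y) θ := by
    intro y
    have hx := hpos θ y
    have hinner : HasDerivAt (fun x : ℝ => v y - β * (Real.log x - Real.log (pref y)))
        (-(β * (pol θ y)⁻¹)) (pol θ y) :=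
      (((Real.hasDerivAt_log hx.ne').sub_const _).const_mul β).const_sub (v y)
    have hψ : HasDerivAt (fun x : ℝ => x * (v y - β * (Real.log x - Real.log (pref y))))
        (1 * (v y - β * (Real.log (pol θ y) - Real.log (pref y)))
          + pol θ y * -(β * (pol θ y)⁻¹)) (pol θ y) :=
      (hasDerivAt_id (pol θ y)).mul hinner
    have heq : (fun x : ℝ => x * (v y - β * (Real.log x - Real.log (pref y))))
        = fun x => x * (v y - β * Real.log (x / pref y)) := by
      funext x
      rcases eq_or_ne x 0 with h | h
      · simp [h]
      · rw [Real.log_div h (hrefpos y).ne']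
    rw [heq] at hψ
    have hcoef : 1 * (v y - β * (Real.log (pol θ y) - Real.log (pref y)))
        + pol θ y * -(β * (pol θ y)⁻¹)
        = v y - β * Real.log (pol θ y / pref y) - β := by
      rw [Real.log_div hx.ne' (hrefpos y).ne']
      field_simp
      ring
    rw [hcoef] at hψ
    exact hψ.comp_hasFDerivAt θ (hD y)
  have hg : HasFDerivAt (fun θ' => ∑ y, pol θ' y * (v y - β * Real.log (pol θ' y / pref y)))
      (∑ y, (v y - β * Real.log (pol θ y / pref y) - β) • D y) θ :=
    HasFDerivAt.fun_sum (fun y _ => hterm2 y)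
  refine ⟨hfirst, ?_⟩
  rw [hfirst, hg.fderiv]
  have hkey : (1 / β) • ∑ y, (v y - β * Real.log (pol θ y / pref y) - β) • D y
      = ∑ y, (v y / β - Real.log (pol θ y / pref y)) • D y := by
    rw [Finset.smul_sum]
    have h1 : ∀ y ∈ Finset.univ, (1 / β) • ((v y - β * Real.log (pol θ y / pref y) - β) • D y)
        = ((v y / β - Real.log (pol θ y / pref y)) + (-1)) • D y := by
      intro y _
      rw [smul_smul]
      congr 1
      field_simp
      ring
    rw [Finset.sum_congr rfl h1, halg]
  rw [hkey]
end

section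
/- Let Y be a countable type, let π_base be a probability mass function on Y, let r : Y → {0,1}, and set Z := ∑_y π_base(y)·r(y); assume 0 < Z ≤ 1. Define p(y) := π_base(y)·r(y)/Z, and for every β > 0 define Z_β := ∑_y π_base(y)·exp(r(y)/β) and p_β(y) := π_base(y)·exp(r(y)/β)/Z_β. Then for every fixed y ∈ Y, p_β(y) converges to p(y) as β tends to 0 from the right. -/
open Filter Topology

/-- Pointwise convergence of the Gibbs distribution `p_β` to the
filtered distribution `p` as `β → 0⁺`. -/
theorem stmt_1 {Y : Type*} [Countable Y]
    (pbase : Y → ℝ) (hnn : ∀ y, 0 ≤ pbase y) (hsum : ∑' y, pbase y = 1)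
    (r : Y → ℝ) (hr : ∀ y, r y = 0 ∨ r y = 1)
    (Z : ℝ) (hZ : Z = ∑' y, pbase y * r y) (hZpos : 0 < Z) (hZle : Z ≤ 1)
    (p : Y → ℝ) (hp : ∀ y, p y = pbase y * r y / Z)
    (pβ : ℝ → Y → ℝ)
    (hpβ : ∀ β, 0 < β → ∀ y,
      pβ β y = pbase y * Real.exp (r y / β) / (∑' y', pbase y' * Real.exp (r y' / β)))
    (y : Y) :
    Tendsto (fun β => pβ β y) (𝓝[>] (0 : ℝ)) (𝓝 (p y)) := by
  have hS : Summable pbase := by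
    by_contra h
    rw [tsum_eq_zero_of_not_summable h] at hsum
    norm_num at hsum
  have hr0 : ∀ z, 0 ≤ r z := fun z => by rcases hr z with h|h <;> simp [h]
  have hr1 : ∀ z, r z ≤ 1 := fun z => by rcases hr z with h|h <;> simp [h]
  have hSr : Summable (fun z => pbase z * r z) :=
    Summable.of_nonneg_of_le (fun z => mul_nonneg (hnn z) (hr0 z))
      (fun z => by nlinarith [hnn z, hr1 z, hr0 z]) hS
  have key : ∀ β : ℝ, 0 < β →
      (∑' y', pbase y' * Real.exp (r y' / β)) = 1 + Z * (Real.exp (1/β) - 1) := by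
    intro β hβ
    have hfun : ∀ y', pbase y' * Real.exp (r y' / β)
        = pbase y' + (pbase y' * r y') * (Real.exp (1/β) - 1) := by
      intro y'
      rcases hr y' with h|h <;> simp [h] <;> ring
    rw [tsum_congr hfun, Summable.tsum_add hS (hSr.mul_right _), tsum_mul_right, hsum, ← hZ]
  have heq : ∀ᶠ β in 𝓝[>](0:ℝ), pβ β y =
      pbase y * Real.exp (r y / β) / (1 + Z * (Real.exp (1/β) - 1)) := by
    filter_upwards [self_mem_nhdsWithin] with β hβ
    rw [hpβ β hβ y, key β hβ]
  rw [tendsto_congr' heq]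
  have hexp : Tendsto (fun β : ℝ => Real.exp (1/β)) (𝓝[>](0:ℝ)) atTop := by
    rw [show (fun β : ℝ => Real.exp (1/β)) = Real.exp ∘ (fun β : ℝ => β⁻¹) by
      funext β; simp [one_div]]
    exact Real.tendsto_exp_atTop.comp tendsto_inv_nhdsGT_zero
  rcases hr y with h|h
  · have hpy : p y = 0 := by simp [hp y, h]
    rw [hpy]
    simp only [h, zero_div, Real.exp_zero, mul_one]
    apply Tendsto.div_atTop tendsto_const_nhds
    have hd : Tendsto (fun t : ℝ => 1 + Z * (t - 1)) atTop atTop := by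
      apply tendsto_atTop_add_const_left
      exact Tendsto.const_mul_atTop hZpos (tendsto_atTop_add_const_right _ _ tendsto_id)
    exact hd.comp hexp
  · have hpy : p y = pbase y / Z := by simp [hp y, h]
    rw [hpy]
    simp only [h]
    have hmain : Tendsto (fun t : ℝ => pbase y * t / (1 + Z * (t - 1))) atTop
        (𝓝 (pbase y / Z)) := by
      have h1 : ∀ᶠ t : ℝ in atTop,
          pbase y * t / (1 + Z * (t - 1)) = pbase y / ((1-Z)/t + Z) := by
        filter_upwards [eventually_ge_atTop 1] with t ht
        have ht0 : t ≠ 0 := by linarith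
        have hden : 1 + Z * (t - 1) ≠ 0 := by nlinarith
        have hrw : (1-Z)/t + Z = (1 + Z * (t-1))/t := by field_simp; ring
        rw [hrw, div_div_eq_mul_div]
      rw [tendsto_congr' h1]
      have h2 : Tendsto (fun t : ℝ => (1-Z)/t + Z) atTop (𝓝 Z) := by
        have h3 := Tendsto.div_atTop (tendsto_const_nhds (α := ℝ) (x := (1-Z:ℝ))) tendsto_id
        simpa using h3.add_const Z
      exact tendsto_const_nhds.div h2 hZpos.ne'
    have hc : (fun β : ℝ => pbase y * Real.exp (1/β) / (1 + Z * (Real.exp (1/β) - 1)))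
        = (fun t : ℝ => pbase y * t / (1 + Z * (t - 1))) ∘ (fun β : ℝ => Real.exp (1/β)) := rfl
    rw [hc]
    exact hmain.comp hexp
end

section
/- Let Y be a countable type, let π_base be a probability mass function on Y, let r : Y → {0,1}, and set Z := ∑_y π_base(y)·r(y); assume 0 < Z ≤ 1. Define p(y) := π_base(y)·r(y)/Z, and for every β > 0 define Z_β := ∑_y π_base(y)·exp(r(y)/β) and p_β(y) := π_base(y)·exp(r(y)/β)/Z_β. Then the total variation distance ‖p_β − p‖_TV := (1/2)·∑_y |p_β(y) − p(y)| converges to 0 as β tends to 0 from the right. -/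
open Filter Topology

/-- The total variation distance between the Gibbs distribution `p_β`
and the filtered distribution `p` converges to `0` as `β → 0⁺`. -/
theorem stmt_2 {Y : Type*} [Countable Y]
    (pbase : Y → ℝ) (hnn : ∀ y, 0 ≤ pbase y) (hsum : ∑' y, pbase y = 1)
    (r : Y → ℝ) (hr : ∀ y, r y = 0 ∨ r y = 1)
    (Z : ℝ) (hZ : Z = ∑' y, pbase y * r y) (hZpos : 0 < Z) (hZle : Z ≤ 1)
    (p : Y → ℝ) (hp : ∀ y, p y = pbase y * r y / Z)
    (pβ : ℝ → Y → ℝ)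
    (hpβ : ∀ β, 0 < β → ∀ y,
      pβ β y = pbase y * Real.exp (r y / β) / (∑' y', pbase y' * Real.exp (r y' / β))) :
    Tendsto (fun β => (1 / 2) * ∑' y, |pβ β y - p y|) (𝓝[>] (0 : ℝ)) (𝓝 0) := by
  have hsumm : Summable pbase := by
    by_contra h
    rw [tsum_eq_zero_of_not_summable h] at hsum
    norm_num at hsum
  have hsummr : Summable (fun y => pbase y * r y) := by
    apply hsumm.of_nonneg_of_le
    · intro y; rcases hr y with h | h <;> simp [h, hnn y]
    · intro y; rcases hr y with h | h <;> simp [h, hnn y]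
  set c : ℝ → ℝ := fun β => (1 / Z) * (1 + Z * (Real.exp (1 / β) - 1))⁻¹ with hc
  -- limit of c
  have hctend : Tendsto c (𝓝[>] (0 : ℝ)) (𝓝 0) := by
    have h1 : Tendsto (fun β : ℝ => 1 / β) (𝓝[>] (0 : ℝ)) atTop := by
      simpa [one_div] using tendsto_inv_nhdsGT_zero (𝕜 := ℝ)
    have h2 : Tendsto (fun t : ℝ => 1 + Z * (t - 1)) atTop atTop := by
      apply tendsto_atTop_add_const_left
      exact (tendsto_atTop_add_const_right atTop (-1) tendsto_id).const_mul_atTop hZpos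
    have h3 : Tendsto (fun β : ℝ => (1 + Z * (Real.exp (1 / β) - 1))⁻¹)
        (𝓝[>] (0 : ℝ)) (𝓝 0) :=
      (h2.comp (Real.tendsto_exp_atTop.comp h1)).inv_tendsto_atTop
    simpa [hc] using h3.const_mul (1 / Z)
  have nonneg : ∀ β ∈ Set.Ioi (0 : ℝ), 0 ≤ (1 / 2) * ∑' y, |pβ β y - p y| := by
    intro β _
    have : 0 ≤ ∑' y, |pβ β y - p y| := tsum_nonneg (fun y => abs_nonneg (pβ β y - p y))
    linarith
  have key : ∀ β ∈ Set.Ioi (0 : ℝ),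
      (1 / 2) * ∑' y, |pβ β y - p y| ≤ (1 / 2) * c β := by
    intro β hβ
    simp only [Set.mem_Ioi] at hβ
    set e := Real.exp (1 / β) with he
    have he1 : 1 ≤ e := Real.one_le_exp (by positivity)
    have hZβval : (∑' y', pbase y' * Real.exp (r y' / β)) = 1 + Z * (e - 1) := by
      have hpt : ∀ y, pbase y * Real.exp (r y / β)
          = pbase y + (pbase y * r y) * (e - 1) := by
        intro y
        rcases hr y with h | h <;> simp [h, he] <;> ring
      rw [tsum_congr hpt, Summable.tsum_add hsumm (hsummr.mul_right _), tsum_mul_right, hsum, hZ]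
    set W := 1 + Z * (e - 1) with hW
    have hWpos : 0 < W := by nlinarith
    have hWge : Z * e ≤ W := by nlinarith
    have hb : ∀ y, |pβ β y - p y| ≤ pbase y * c β := by
      intro y
      have hcβ : c β = 1 / Z * W⁻¹ := by rw [hc]
      rw [hpβ β hβ y, hp y, hZβval, hcβ]
      rcases hr y with h | h
      · simp only [h, zero_div, Real.exp_zero, mul_one, mul_zero, sub_zero]
        rw [abs_of_nonneg (div_nonneg (hnn y) hWpos.le)]
        rw [div_eq_mul_inv]
        have : W⁻¹ ≤ 1 / Z * W⁻¹ := by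
          have h1Z : (1 : ℝ) ≤ 1 / Z := by
            rw [le_div_iff₀ hZpos]; linarith
          nlinarith [inv_nonneg.mpr hWpos.le]
        exact mul_le_mul_of_nonneg_left this (hnn y)
      · simp only [h, mul_one]
        rw [← he]
        have hle : pbase y * e / W ≤ pbase y / Z := by
          rw [div_le_div_iff₀ hWpos hZpos]
          nlinarith [hnn y]
        rw [abs_sub_comm, abs_of_nonneg (by linarith)]
        have heq : pbase y / Z - pbase y * e / W = pbase y * (1 - Z) / (Z * W) := by
          field_simp
          ring
        rw [heq]
        have hR : pbase y * (1 / Z * W⁻¹) = pbase y / (Z * W) := by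
          field_simp
        rw [hR, div_le_div_iff₀ (by positivity) (by positivity)]
        nlinarith [hnn y, mul_pos hZpos hWpos, mul_nonneg (mul_nonneg (hnn y) hZpos.le) (mul_pos hZpos hWpos).le]
    have hsum2 : Summable fun y => pbase y * c β := hsumm.mul_right _
    have hsum1 : Summable fun y => |pβ β y - p y| :=
      hsum2.of_nonneg_of_le (fun y => abs_nonneg _) hb
    have := Summable.tsum_le_tsum hb hsum1 hsum2
    rw [tsum_mul_right, hsum, one_mul] at this
    linarith
  have hhalf : Tendsto (fun β => (1 / 2) * c β) (𝓝[>] (0 : ℝ)) (𝓝 0) := by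
    simpa only [mul_zero] using hctend.const_mul (1 / 2 : ℝ)
  exact tendsto_of_tendsto_of_tendsto_of_le_of_le' tendsto_const_nhds hhalf
    (eventually_nhdsWithin_of_forall nonneg) (eventually_nhdsWithin_of_forall key)
end

section
/- Let Y be a countable type, let π_base be a probability mass function on Y, let r : Y → {0,1}, and set Z := ∑_y π_base(y)·r(y); assume 0 < Z ≤ 1. Define p(y) := π_base(y)·r(y)/Z, and for β > 0 define Z_β := ∑_y π_base(y)·exp(r(y)/β) and p_β(y) := π_base(y)·exp(r(y)/β)/Z_β. Then for every β > 0, setting ε := exp(−1/β)·(1 − Z), the total variation distance satisfies the exact identity (1/2)·∑_y |p_β(y) − p(y)| = ε/(Z + ε) = exp(−1/β)·(1 − Z)/(Z + exp(−1/β)·(1 − Z)). -/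
/-- Exact identity for the total variation distance between the Gibbs
distribution `p_β` and the filtered distribution `p`. -/
theorem stmt_3 {Y : Type*} [Countable Y]
    (pbase : Y → ℝ) (hnn : ∀ y, 0 ≤ pbase y) (hsum : ∑' y, pbase y = 1)
    (r : Y → ℝ) (hr : ∀ y, r y = 0 ∨ r y = 1)
    (Z : ℝ) (hZ : Z = ∑' y, pbase y * r y) (hZpos : 0 < Z) (hZle : Z ≤ 1)
    (p : Y → ℝ) (hp : ∀ y, p y = pbase y * r y / Z)
    (β : ℝ) (hβ : 0 < β)
    (Zβ : ℝ) (hZβ : Zβ = ∑' y, pbase y * Real.exp (r y / β))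
    (pβ : Y → ℝ) (hpβ : ∀ y, pβ y = pbase y * Real.exp (r y / β) / Zβ)
    (ε : ℝ) (hε : ε = Real.exp (-1 / β) * (1 - Z)) :
    (1 / 2) * ∑' y, |pβ y - p y| = ε / (Z + ε)
    ∧ (1 / 2) * ∑' y, |pβ y - p y|
        = Real.exp (-1 / β) * (1 - Z) / (Z + Real.exp (-1 / β) * (1 - Z)) := by
  have h1Z : 0 ≤ 1 - Z := by linarith
  have hS : Summable pbase := by
    by_contra h
    rw [tsum_eq_zero_of_not_summable h] at hsum
    norm_num at hsum
  have hSr : Summable (fun y => pbase y * r y) := by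
    refine Summable.of_nonneg_of_le (fun y => ?_) (fun y => ?_) hS
    · rcases hr y with h | h <;> simp [h, hnn y]
    · rcases hr y with h | h <;> simp [h, hnn y]
  have hpt : ∀ y, pbase y * Real.exp (r y / β)
      = Real.exp (1 / β) * (pbase y * r y) + (pbase y - pbase y * r y) := by
    intro y
    rcases hr y with h | h <;> rw [h] <;> simp <;> ring
  have hZβval : Zβ = Real.exp (1 / β) * Z + (1 - Z) := by
    rw [hZβ, tsum_congr hpt, Summable.tsum_add (hSr.mul_left _) (hS.sub hSr), tsum_mul_left,
      Summable.tsum_sub hS hSr, hsum, ← hZ]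
  have hZβpos : 0 < Zβ := by
    rw [hZβval]
    have := Real.exp_pos (1 / β)
    nlinarith
  have habs : ∀ y, |pβ y - p y|
      = (1 - Z) / (Z * Zβ) * (pbase y * r y) + (1 / Zβ) * (pbase y - pbase y * r y) := by
    intro y
    have hnny := hnn y
    rw [hpβ, hp]
    rcases hr y with h | h
    · rw [h]
      simp only [mul_zero, zero_div, sub_zero, zero_div, Real.exp_zero, mul_one]
      rw [abs_of_nonneg (by positivity)]
      ring
    · rw [h]
      have hkey : pbase y * Real.exp (1 / β) / Zβ - pbase y * 1 / Z
          = -((1 - Z) / (Z * Zβ) * (pbase y * 1)) := by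
        rw [hZβval]
        field_simp
        ring
      rw [hkey, abs_neg, abs_of_nonneg
        (mul_nonneg (div_nonneg h1Z (le_of_lt (mul_pos hZpos hZβpos)))
          (by simpa using hnn y))]
      ring
  have hTV : ∑' y, |pβ y - p y| = 2 * (1 - Z) / Zβ := by
    rw [tsum_congr habs, Summable.tsum_add (hSr.mul_left _) ((hS.sub hSr).mul_left _),
      tsum_mul_left, tsum_mul_left, Summable.tsum_sub hS hSr, hsum, ← hZ]
    field_simp
    ring
  have hexp : Real.exp (-1 / β) * Real.exp (1 / β) = 1 := by
    have h0 : -1 / β + 1 / β = 0 := by ring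
    rw [← Real.exp_add, h0, Real.exp_zero]
  have hden : Z + ε = Real.exp (-1 / β) * Zβ := by
    rw [hε, hZβval]
    linear_combination (-Z) * hexp
  have hmain : (1 / 2) * ∑' y, |pβ y - p y| = ε / (Z + ε) := by
    rw [hTV, hden, hε, mul_div_mul_left _ _ (Real.exp_ne_zero _)]
    ring
  exact ⟨hmain, by rw [hmain, hε]⟩
end

section
/- Let Y be a countable type, let π_base be a probability mass function on Y, let r : Y → {0,1}, and set Z := ∑_y π_base(y)·r(y); assume 0 < Z ≤ 1. For β > 0 define Z_β := ∑_y π_base(y)·exp(r(y)/β), p_β(y) := π_base(y)·exp(r(y)/β)/Z_β, and ε := exp(−1/β)·(1 − Z). Then for every y ∈ Y: if r(y) = 1 then p_β(y) = π_base(y)/(Z + ε), and if r(y) = 0 then p_β(y) = exp(−1/β)·π_base(y)/(Z + ε). -/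
/-- Closed form of the Gibbs distribution `p_β` on the accepted and
rejected points. -/
theorem stmt_5 {Y : Type*} [Countable Y]
    (pbase : Y → ℝ) (hnn : ∀ y, 0 ≤ pbase y) (hsum : ∑' y, pbase y = 1)
    (r : Y → ℝ) (hr : ∀ y, r y = 0 ∨ r y = 1)
    (Z : ℝ) (hZ : Z = ∑' y, pbase y * r y) (hZpos : 0 < Z) (hZle : Z ≤ 1)
    (β : ℝ) (hβ : 0 < β)
    (Zβ : ℝ) (hZβ : Zβ = ∑' y, pbase y * Real.exp (r y / β))
    (pβ : Y → ℝ) (hpβ : ∀ y, pβ y = pbase y * Real.exp (r y / β) / Zβ)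
    (ε : ℝ) (hε : ε = Real.exp (-1 / β) * (1 - Z)) :
    ∀ y, (r y = 1 → pβ y = pbase y / (Z + ε))
       ∧ (r y = 0 → pβ y = Real.exp (-1 / β) * pbase y / (Z + ε)) := by
  have hsb : Summable pbase := by
    by_contra h
    rw [tsum_eq_zero_of_not_summable h] at hsum
    norm_num at hsum
  have hle : ∀ y, pbase y * r y ≤ pbase y := by
    intro y
    rcases hr y with h | h <;> simp [h, hnn y]
  have hsbr : Summable (fun y => pbase y * r y) :=
    hsb.of_nonneg_of_le (fun y => by rcases hr y with h | h <;> simp [h, hnn y]) hle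
  have key : ∀ y, pbase y * Real.exp (r y / β) =
      Real.exp (1 / β) * (pbase y * r y) + (pbase y - pbase y * r y) := by
    intro y
    rcases hr y with h | h <;> simp [h] <;> ring
  have hZβeq : Zβ = Real.exp (1 / β) * Z + (1 - Z) := by
    rw [hZβ, tsum_congr key, Summable.tsum_add (hsbr.mul_left _) (hsb.sub hsbr),
      tsum_mul_left, Summable.tsum_sub hsb hsbr, hsum, ← hZ]
  have hZε : Z + ε = Real.exp (-1 / β) * Zβ := by
    rw [hε, hZβeq]
    have : Real.exp (-1 / β) * Real.exp (1 / β) = 1 := by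
      rw [← Real.exp_add]; ring_nf; exact Real.exp_zero
    nlinarith [this]
  have hZβpos : 0 < Zβ := by
    rw [hZβeq]
    nlinarith [Real.exp_pos (1/β)]
  have hZεpos : Z + ε ≠ 0 := by
    rw [hZε]; positivity
  intro y
  constructor
  · intro h
    rw [hpβ y, h, hZε]
    rw [div_eq_div_iff (by positivity) (by positivity)]
    have h1 : Real.exp (-1 / β) * Real.exp (1 / β) = 1 := by
      rw [← Real.exp_add]; ring_nf; exact Real.exp_zero
    rw [show pbase y * Real.exp (1/β) * (Real.exp (-1/β) * Zβ)
        = (Real.exp (-1/β) * Real.exp (1/β)) * (pbase y * Zβ) by ring, h1, one_mul]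
  · intro h
    rw [hpβ y, h, hZε]
    rw [div_eq_div_iff (by positivity) (by positivity)]
    simp
    ring
end

section
/- Let Y be a countable type, let π_base be a probability mass function on Y, let r : Y → {0,1}, and set Z := ∑_y π_base(y)·r(y); assume Z > 0, and define p(y) := π_base(y)·r(y)/Z. Let q be any probability mass function on Y such that q(y) = 0 whenever r(y) = 0, q(y) > 0 implies π_base(y) > 0, and the function y ↦ q(y)·log(q(y)/π_base(y)) is summable (with convention 0·log(0/t) = 0). Then KL(q‖π_base) := ∑_y q(y)·log(q(y)/π_base(y)) ≥ −log Z, and equality holds if and only if q = p. -/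
/-- The filtered distribution `p` is the I-projection of `π_base` onto
the set of distributions supported where `r = 1`: any such pmf `q` satisfies
`KL(q‖π_base) ≥ −log Z`, with equality iff `q = p`. -/
theorem stmt_7 {Y : Type*} [Countable Y]
    (pbase : Y → ℝ) (hnn : ∀ y, 0 ≤ pbase y) (hsum : ∑' y, pbase y = 1)
    (r : Y → ℝ) (hr : ∀ y, r y = 0 ∨ r y = 1)
    (Z : ℝ) (hZ : Z = ∑' y, pbase y * r y) (hZpos : 0 < Z)
    (p : Y → ℝ) (hp : ∀ y, p y = pbase y * r y / Z)
    (q : Y → ℝ) (hqnn : ∀ y, 0 ≤ q y) (hqsum : ∑' y, q y = 1)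
    (hsupp : ∀ y, r y = 0 → q y = 0)
    (habs : ∀ y, 0 < q y → 0 < pbase y)
    (hsummable : Summable (fun y => q y * Real.log (q y / pbase y))) :
    -Real.log Z ≤ ∑' y, q y * Real.log (q y / pbase y)
    ∧ ((∑' y, q y * Real.log (q y / pbase y)) = -Real.log Z ↔ q = p) := by
  -- basic summabilities
  have hQs : Summable q := by
    by_contra h
    rw [tsum_eq_zero_of_not_summable h] at hqsum
    norm_num at hqsum
  have hPbs : Summable pbase := by
    by_contra h
    rw [tsum_eq_zero_of_not_summable h] at hsum
    norm_num at hsum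
  have hrnn : ∀ y, 0 ≤ r y := fun y => by rcases hr y with h | h <;> rw [h] <;> norm_num
  have hPRs : Summable (fun y => pbase y * r y) := by
    apply Summable.of_nonneg_of_le (fun y => mul_nonneg (hnn y) (hrnn y))
      (fun y => ?_) hPbs
    rcases hr y with h | h <;> rw [h] <;> simp [hnn y]
  have hPs : Summable p := (hPRs.div_const Z).congr fun y => (hp y).symm
  have hpnn : ∀ y, 0 ≤ p y := fun y => by
    rw [hp y]; exact div_nonneg (mul_nonneg (hnn y) (hrnn y)) hZpos.le
  have hPsum : ∑' y, p y = 1 := by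
    simp_rw [hp]
    rw [tsum_div_const, ← hZ, div_self hZpos.ne']
  -- facts on the support of q
  have hr1 : ∀ y, 0 < q y → r y = 1 := fun y hy =>
    (hr y).resolve_left fun h => hy.ne' (hsupp y h)
  have hppos : ∀ y, 0 < q y → 0 < p y := fun y hy => by
    rw [hp y, hr1 y hy, mul_one]; exact div_pos (habs y hy) hZpos
  -- decomposition of q log(q/p)
  have hg : ∀ y, q y * Real.log (q y / p y)
      = q y * Real.log (q y / pbase y) + q y * Real.log Z := by
    intro y
    rcases eq_or_lt_of_le (hqnn y) with h0 | hpos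
    · simp [← h0]
    · have hb := habs y hpos
      rw [hp y, hr1 y hpos, mul_one]
      have h1 : q y / (pbase y / Z) = (q y / pbase y) * Z := by
        field_simp
      rw [h1, Real.log_mul (div_pos hpos hb).ne' hZpos.ne', mul_add]
  have hgs : Summable (fun y => q y * Real.log (q y / p y)) :=
    (hsummable.add (hQs.mul_right (Real.log Z))).congr fun y => (hg y).symm
  have htsum_g : (∑' y, q y * Real.log (q y / p y))
      = (∑' y, q y * Real.log (q y / pbase y)) + Real.log Z := by
    rw [tsum_congr hg, Summable.tsum_add hsummable (hQs.mul_right (Real.log Z)),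
      tsum_mul_right, hqsum, one_mul]
  -- pointwise Gibbs bound
  have hbound : ∀ y, q y - p y ≤ q y * Real.log (q y / p y) := by
    intro y
    rcases eq_or_lt_of_le (hqnn y) with h0 | hpos
    · simp [← h0]; linarith [hpnn y]
    · have hpy := hppos y hpos
      have hlog := Real.log_le_sub_one_of_pos (div_pos hpy hpos)
      have hlg : Real.log (q y / p y) = - Real.log (p y / q y) := by
        rw [← Real.log_inv, inv_div]
      have hmul := mul_le_mul_of_nonneg_left hlog hpos.le
      have hq : q y * (p y / q y) = p y := by field_simp
      rw [hlg]
      nlinarith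
  have hsubS : Summable (fun y => q y - p y) := hQs.sub hPs
  have hsub0 : (∑' y, (q y - p y)) = 0 := by
    rw [Summable.tsum_sub hQs hPs, hqsum, hPsum, sub_self]
  have hD : 0 ≤ ∑' y, q y * Real.log (q y / p y) := by
    have := Summable.tsum_le_tsum hbound hsubS hgs
    rw [hsub0] at this
    exact this
  constructor
  · linarith [htsum_g, hD]
  constructor
  · -- equality implies q = p
    intro heq
    have hD0 : (∑' y, q y * Real.log (q y / p y)) = 0 := by linarith [htsum_g]
    set f : Y → ℝ := fun y => q y * Real.log (q y / p y) - (q y - p y) with hf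
    have hfnn : ∀ y, 0 ≤ f y := fun y => sub_nonneg.mpr (hbound y)
    have hfs : Summable f := hgs.sub hsubS
    have hftsum : (∑' y, f y) = 0 := by
      rw [Summable.tsum_sub hgs hsubS, hD0, hsub0, sub_self]
    have hf0 : ∀ y, f y = 0 := by
      intro y
      refine le_antisymm ?_ (hfnn y)
      calc f y ≤ ∑' y, f y := Summable.le_tsum hfs y (fun j _ => hfnn j)
        _ = 0 := hftsum
    funext y
    rcases eq_or_lt_of_le (hqnn y) with h0 | hpos
    · have := hf0 y
      simp only [hf, ← h0] at this ⊢
      simp at this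
      linarith
    · have hpy := hppos y hpos
      by_contra hne
      have hne' : p y / q y ≠ 1 := by
        rw [Ne, div_eq_one_iff_eq hpos.ne']
        exact fun h => hne h.symm
      have hlog := Real.log_lt_sub_one_of_pos (div_pos hpy hpos) hne'
      have hlg : Real.log (q y / p y) = - Real.log (p y / q y) := by
        rw [← Real.log_inv, inv_div]
      have hq : q y * (p y / q y) = p y := by field_simp
      have := hf0 y
      simp only [hf, hlg] at this
      nlinarith [mul_lt_mul_of_pos_left hlog hpos]
  · -- q = p implies equality
    intro hqp
    have hz : (∑' y, q y * Real.log (q y / p y)) = 0 := by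
      have hzz : ∀ y, q y * Real.log (q y / p y) = 0 := by
        intro y
        rw [hqp]
        rcases eq_or_lt_of_le (hpnn y) with h0 | hpos
        · simp [← h0]
        · rw [div_self hpos.ne', Real.log_one, mul_zero]
      simp [hzz]
    linarith [htsum_g]
end

section
/- Let Y be a countable type, let α ∈ (0,1), and let π and p be probability mass functions on Y. Let A := {y | p(y) > 0} and define f_α(t) := (t^α − α·t − (1 − α))/(α·(α − 1)). Then the functions y ↦ p(y)·f_α(π(y)/p(y)) (restricted to A) and y ↦ π(y)^α·p(y)^{1−α} are summable, and the extended α-divergence satisfies D_α(π,p) := ∑_{y ∈ A} p(y)·f_α(π(y)/p(y)) + (∑_{y ∉ A} π(y))/(1 − α) = (1 − H_α(π,p))/(α·(1 − α)), where H_α(π,p) := ∑_y π(y)^α·p(y)^{1−α} is the Hellinger sum. -/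
/-- Connection between the extended α-divergence (with boundary term)
and the Hellinger sum: `D_α(π,p) = (1 − H_α(π,p))/(α(1 − α))`, together with the
relevant summability assertions. -/
theorem stmt_9 {Y : Type*} [Countable Y] (α : ℝ) (hα : α ∈ Set.Ioo (0 : ℝ) 1)
    (q p : Y → ℝ) (hqnn : ∀ y, 0 ≤ q y) (hqsum : ∑' y, q y = 1)
    (hpnn : ∀ y, 0 ≤ p y) (hpsum : ∑' y, p y = 1) :
    Summable (fun y => if 0 < p y then
        p y * (((q y / p y) ^ α - α * (q y / p y) - (1 - α)) / (α * (α - 1))) else 0)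
    ∧ Summable (fun y => q y ^ α * p y ^ (1 - α))
    ∧ (∑' y, if 0 < p y then
          p y * (((q y / p y) ^ α - α * (q y / p y) - (1 - α)) / (α * (α - 1))) else 0)
        + (∑' y, if 0 < p y then 0 else q y) / (1 - α)
      = (1 - ∑' y, q y ^ α * p y ^ (1 - α)) / (α * (1 - α)) := by
  obtain ⟨hα0, hα1⟩ := hα
  have hα1' : (0:ℝ) < 1 - α := by linarith
  have hsq : Summable q := by
    by_contra h
    rw [tsum_eq_zero_of_not_summable h] at hqsum
    norm_num at hqsum
  have hsp : Summable p := by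
    by_contra h
    rw [tsum_eq_zero_of_not_summable h] at hpsum
    norm_num at hpsum
  -- Hellinger term summable via weighted AM-GM
  have hnn : ∀ y, 0 ≤ q y ^ α * p y ^ (1 - α) := fun y =>
    mul_nonneg (Real.rpow_nonneg (hqnn y) _) (Real.rpow_nonneg (hpnn y) _)
  have hle : ∀ y, q y ^ α * p y ^ (1 - α) ≤ α * q y + (1 - α) * p y := fun y =>
    Real.geom_mean_le_arith_mean2_weighted hα0.le hα1'.le (hqnn y) (hpnn y) (by ring)
  have Sh : Summable (fun y => q y ^ α * p y ^ (1 - α)) :=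
    Summable.of_nonneg_of_le hnn hle ((hsq.mul_left α).add (hsp.mul_left (1 - α)))
  -- restricted q summable
  have Sq1 : Summable (fun y => if 0 < p y then q y else 0) := by
    refine Summable.of_nonneg_of_le (fun y => ?_) (fun y => ?_) hsq
    · split <;> simp [hqnn y]
    · split <;> simp [hqnn y]
  -- pointwise identity
  have key : ∀ y, (if 0 < p y then
        p y * (((q y / p y) ^ α - α * (q y / p y) - (1 - α)) / (α * (α - 1))) else 0)
      = (q y ^ α * p y ^ (1 - α) - α * (if 0 < p y then q y else 0) - (1 - α) * p y)
          / (α * (α - 1)) := by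
    intro y
    by_cases hp : 0 < p y
    · have h1 : p y * (q y / p y) ^ α = q y ^ α * p y ^ (1 - α) := by
        rw [Real.div_rpow (hqnn y) hp.le, Real.rpow_sub hp, Real.rpow_one]
        field_simp
      have h2 : p y * (q y / p y) = q y := by
        rw [mul_comm, div_mul_cancel₀ _ hp.ne']
      rw [if_pos hp, if_pos hp]
      rw [show p y * (((q y / p y) ^ α - α * (q y / p y) - (1 - α)) / (α * (α - 1)))
          = (p y * (q y / p y) ^ α - α * (p y * (q y / p y)) - (1 - α) * p y)
              / (α * (α - 1)) by ring, h1, h2]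
    · have hp0 : p y = 0 := le_antisymm (not_lt.1 hp) (hpnn y)
      simp [if_neg hp, hp0, Real.zero_rpow hα1'.ne']
  -- summability of the divergence term
  have Sg : Summable (fun y => if 0 < p y then
      p y * (((q y / p y) ^ α - α * (q y / p y) - (1 - α)) / (α * (α - 1))) else 0) := by
    have : Summable (fun y =>
        (q y ^ α * p y ^ (1 - α) - α * (if 0 < p y then q y else 0) - (1 - α) * p y)
          / (α * (α - 1))) :=
      ((Sh.sub (Sq1.mul_left α)).sub (hsp.mul_left (1 - α))).div_const _
    exact this.congr (fun y => (key y).symm)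
  refine ⟨Sg, Sh, ?_⟩
  -- boundary term
  have hb : ∀ y, (if 0 < p y then 0 else q y) = q y - (if 0 < p y then q y else 0) := by
    intro y; split <;> simp
  have htb : (∑' y, if 0 < p y then 0 else q y)
      = 1 - ∑' y, (if 0 < p y then q y else 0) := by
    rw [tsum_congr hb, Summable.tsum_sub hsq Sq1, hqsum]
  -- main sum
  have htg : (∑' y, if 0 < p y then
      p y * (((q y / p y) ^ α - α * (q y / p y) - (1 - α)) / (α * (α - 1))) else 0)
      = ((∑' y, q y ^ α * p y ^ (1 - α))
          - α * (∑' y, if 0 < p y then q y else 0) - (1 - α) * 1) / (α * (α - 1)) := by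
    rw [tsum_congr key, tsum_div_const,
      Summable.tsum_sub (Sh.sub (Sq1.mul_left α)) (hsp.mul_left (1 - α)),
      Summable.tsum_sub Sh (Sq1.mul_left α), tsum_mul_left, tsum_mul_left, hpsum]
  rw [htg, htb]
  set H := ∑' y, q y ^ α * p y ^ (1 - α)
  set Q1 := ∑' y, (if 0 < p y then q y else 0)
  have h1 : α ≠ 0 := hα0.ne'
  have h2 : (1:ℝ) - α ≠ 0 := hα1'.ne'
  have h3 : α - 1 ≠ 0 := by intro h; apply h2; linarith
  field_simp
  ring
end

section
/- (Support Decomposition) Let Y be a countable type, let α ∈ (0,1), and let π and p be probability mass functions on Y. Let A := {y | p(y) > 0}, assume π(A) := ∑_{y ∈ A} π(y) > 0, and define the renormalized pmf π_A by π_A(y) := π(y)/π(A) for y ∈ A and π_A(y) := 0 otherwise. Then the extended α-divergence decomposes as D_α(π,p) = (1 − π(A)^α)/(α·(1 − α)) + π(A)^α · D_α(π_A,p). -/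
/-- Support Decomposition: the extended α-divergence (with boundary
term) decomposes as a leakage penalty plus a rescaled shape divergence:
`D_α(π,p) = (1 − π(A)^α)/(α(1 − α)) + π(A)^α · D_α(π_A,p)`. -/
theorem stmt_11 {Y : Type*} [Countable Y] (α : ℝ) (hα : α ∈ Set.Ioo (0 : ℝ) 1)
    (q p : Y → ℝ) (hqnn : ∀ y, 0 ≤ q y) (hqsum : ∑' y, q y = 1)
    (hpnn : ∀ y, 0 ≤ p y) (hpsum : ∑' y, p y = 1)
    (qA : ℝ) (hqA : qA = ∑' y, if 0 < p y then q y else 0) (hqApos : 0 < qA)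
    (qcond : Y → ℝ) (hqcond : ∀ y, qcond y = if 0 < p y then q y / qA else 0) :
    (∑' y, if 0 < p y then
        p y * (((q y / p y) ^ α - α * (q y / p y) - (1 - α)) / (α * (α - 1))) else 0)
      + (∑' y, if 0 < p y then 0 else q y) / (1 - α)
    = (1 - qA ^ α) / (α * (1 - α))
      + qA ^ α *
        ((∑' y, if 0 < p y then
            p y * (((qcond y / p y) ^ α - α * (qcond y / p y) - (1 - α)) / (α * (α - 1))) else 0)
          + (∑' y, if 0 < p y then 0 else qcond y) / (1 - α)) := by
  obtain ⟨hα0, hα1⟩ := hα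
  have hαne : α ≠ 0 := hα0.ne'
  have hα1ne : α - 1 ≠ 0 := by linarith
  have h1α : (0:ℝ) < 1 - α := by linarith
  have hcpos : 0 < qA := hqApos
  have hcne : qA ≠ 0 := hcpos.ne'
  have hu : (0:ℝ) < qA ^ α := Real.rpow_pos_of_pos hcpos α
  have hune : qA ^ α ≠ 0 := hu.ne'
  -- summability of q and p
  have hq_summ : Summable q := by
    by_contra h
    rw [tsum_eq_zero_of_not_summable h] at hqsum; norm_num at hqsum
  have hp_summ : Summable p := by
    by_contra h
    rw [tsum_eq_zero_of_not_summable h] at hpsum; norm_num at hpsum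
  have hg1 : Summable (fun y => if 0 < p y then q y else 0) := by
    apply Summable.of_nonneg_of_le _ _ hq_summ
    · intro y; split_ifs with h; exacts [hqnn y, le_rfl]
    · intro y; split_ifs with h; exacts [le_rfl, hqnn y]
  have hg2eq : (fun y => if 0 < p y then p y else 0) = p := by
    funext y; split_ifs with h
    · rfl
    · push_neg at h; linarith [hpnn y]
  have hg2 : Summable (fun y => if 0 < p y then p y else 0) := by rw [hg2eq]; exact hp_summ
  have hg2sum : (∑' y, if 0 < p y then p y else 0) = 1 := by rw [hg2eq]; exact hpsum
  -- AM-GM : t ^ α ≤ α * t + (1 - α) for t ≥ 0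
  have hamgm : ∀ t : ℝ, 0 ≤ t → t ^ α ≤ α * t + (1 - α) := by
    intro t ht
    have := Real.geom_mean_le_arith_mean2_weighted hα0.le h1α.le ht zero_le_one (by ring)
    simpa using this
  -- summability of the shape-divergence summand
  have hg3 : Summable (fun y => if 0 < p y then
      p y * (((q y / p y) ^ α - α * (q y / p y) - (1 - α)) / (α * (α - 1))) else 0) := by
    apply Summable.of_nonneg_of_le (f := fun y => (α * q y + (1 - α) * p y) / (α * (1 - α)))
    · intro y; split_ifs with h
      · apply mul_nonneg (hpnn y)
        apply div_nonneg_of_nonpos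
        · have := hamgm (q y / p y) (div_nonneg (hqnn y) (hpnn y)); linarith
        · nlinarith
      · exact le_rfl
    · intro y
      have hbnn : 0 ≤ (α * q y + (1 - α) * p y) / (α * (1 - α)) := by
        apply div_nonneg _ (by positivity)
        have := hqnn y; have := hpnn y; nlinarith
      split_ifs with h
      · have hp' : p y ≠ 0 := h.ne'
        have hq' : p y * (q y / p y) = q y := mul_div_cancel₀ _ hp'
        have hrnn : 0 ≤ p y * (q y / p y) ^ α :=
          mul_nonneg (hpnn y) (Real.rpow_nonneg (div_nonneg (hqnn y) (hpnn y)) α)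
        have hid : p y * (((q y / p y) ^ α - α * (q y / p y) - (1 - α)) / (α * (α - 1)))
            = (α * (p y * (q y / p y)) + (1 - α) * p y - p y * (q y / p y) ^ α)
              / (α * (1 - α)) := by
          field_simp
          ring
        rw [hid, hq']
        apply div_le_div_of_nonneg_right ?_ (by positivity)
        · linarith
      · exact hbnn
    · exact ((hq_summ.mul_left α).add (hp_summ.mul_left (1 - α))).div_const _
  -- key termwise identity
  have hkey : ∀ y, qA ^ α * (if 0 < p y then
        p y * (((qcond y / p y) ^ α - α * (qcond y / p y) - (1 - α)) / (α * (α - 1))) else 0)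
      = (if 0 < p y then
          p y * (((q y / p y) ^ α - α * (q y / p y) - (1 - α)) / (α * (α - 1))) else 0)
        + ((1 - qA ^ α / qA) / (α - 1)) * (if 0 < p y then q y else 0)
        + ((qA ^ α - 1) / α) * (if 0 < p y then p y else 0) := by
    intro y
    split_ifs with h
    · have hp' : p y ≠ 0 := h.ne'
      rw [hqcond y, if_pos h]
      rw [show q y / qA / p y = q y / p y / qA by ring]
      rw [Real.div_rpow (div_nonneg (hqnn y) (hpnn y)) hcpos.le]
      have ht : q y / p y * p y = q y := div_mul_cancel₀ _ hp'
      set t := q y / p y with htdef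
      rw [← ht]
      field_simp
      ring
    · simp
  -- sum the key identity
  have hS' : qA ^ α * (∑' y, if 0 < p y then
        p y * (((qcond y / p y) ^ α - α * (qcond y / p y) - (1 - α)) / (α * (α - 1))) else 0)
      = (∑' y, if 0 < p y then
          p y * (((q y / p y) ^ α - α * (q y / p y) - (1 - α)) / (α * (α - 1))) else 0)
        + ((1 - qA ^ α / qA) / (α - 1)) * qA + ((qA ^ α - 1) / α) := by
    rw [← tsum_mul_left, tsum_congr hkey,
      Summable.tsum_add (hg3.add (hg1.mul_left _)) (hg2.mul_left _),
      Summable.tsum_add hg3 (hg1.mul_left _), tsum_mul_left, tsum_mul_left, ← hqA, hg2sum, mul_one]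
  -- the conditional pmf vanishes off the support
  have hzero : (∑' y, if 0 < p y then (0:ℝ) else qcond y) = 0 := by
    have h0 : ∀ y, (if 0 < p y then (0:ℝ) else qcond y) = 0 := by
      intro y; split_ifs with h
      · rfl
      · rw [hqcond y, if_neg h]
    rw [tsum_congr h0, tsum_zero]
  -- mass off the support
  have hB : (∑' y, if 0 < p y then (0:ℝ) else q y) = 1 - qA := by
    have hdec : ∀ y, (if 0 < p y then (0:ℝ) else q y)
        = q y - (if 0 < p y then q y else 0) := by
      intro y; split_ifs <;> ring
    rw [tsum_congr hdec, Summable.tsum_sub hq_summ hg1, hqsum, ← hqA]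
  rw [hzero, hB, zero_div, add_zero, hS']
  set S := (∑' y, if 0 < p y then
      p y * (((q y / p y) ^ α - α * (q y / p y) - (1 - α)) / (α * (α - 1))) else 0) with hSdef
  field_simp
  ring
end

section
/- Let Y be a finite type, let p be a probability mass function on Y with support A := {y | p(y) > 0}, and let π and π' be probability mass functions on Y with π(y) > 0 and π'(y) > 0 for all y. For α ∈ (0,1) define H_α(q,p) := ∑_y q(y)^α·p(y)^{1−α} and D_α(q,p) := (1 − H_α(q,p))/(α·(1 − α)). If π(A) := ∑_{y ∈ A} π(y) is strictly greater than π'(A) := ∑_{y ∈ A} π'(y), then there exists α₀ ∈ (0,1) such that for all α with α₀ < α < 1 one has D_α(π,p) < D_α(π',p). -/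
/-- If `π` puts strictly more mass than `π'` on the support `A` of
the target `p`, then for all `α` close enough to `1` (within `(0,1)`) the
α-divergence of `π` to `p` is strictly smaller than that of `π'`. -/
theorem stmt_16 {Y : Type*} [Fintype Y]
    (p : Y → ℝ) (hpnn : ∀ y, 0 ≤ p y) (hpsum : ∑ y, p y = 1)
    (q q' : Y → ℝ)
    (hqpos : ∀ y, 0 < q y) (hqsum : ∑ y, q y = 1)
    (hq'pos : ∀ y, 0 < q' y) (hq'sum : ∑ y, q' y = 1)
    (hmass : (∑ y, if 0 < p y then q' y else 0) < ∑ y, if 0 < p y then q y else 0) :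
    ∃ α₀ ∈ Set.Ioo (0 : ℝ) 1, ∀ α : ℝ, α₀ < α → α < 1 →
      (1 - ∑ y, q y ^ α * p y ^ (1 - α)) / (α * (1 - α))
        < (1 - ∑ y, q' y ^ α * p y ^ (1 - α)) / (α * (1 - α)) := by
  set G : ℝ → ℝ := fun α => ∑ y, (if 0 < p y then q y ^ α * p y ^ (1 - α) else 0)
  set G' : ℝ → ℝ := fun α => ∑ y, (if 0 < p y then q' y ^ α * p y ^ (1 - α) else 0)
  have hcont : ∀ (r : Y → ℝ), (∀ y, 0 < r y) →
      ContinuousAt (fun α : ℝ => ∑ y, (if 0 < p y then r y ^ α * p y ^ (1 - α) else 0)) 1 := by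
    intro r hr
    apply Continuous.continuousAt
    apply continuous_finset_sum
    intro y _
    by_cases hy : 0 < p y
    · simp only [hy, if_true]
      apply Continuous.mul
      · exact continuous_iff_continuousAt.mpr fun x => Real.continuousAt_const_rpow (hr y).ne'
      · exact continuous_iff_continuousAt.mpr fun x =>
          (Real.continuousAt_const_rpow hy.ne').comp (continuousAt_const.sub continuousAt_id)
    · simp only [hy, if_false]
      exact continuous_const
  have hG1 : ∀ (r : Y → ℝ), (∀ y, 0 < r y) →
      (∑ y, (if 0 < p y then r y ^ (1:ℝ) * p y ^ (1 - (1:ℝ)) else 0))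
        = ∑ y, (if 0 < p y then r y else 0) := by
    intro r hr
    refine Finset.sum_congr rfl fun y _ => ?_
    by_cases hy : 0 < p y
    · simp [hy, Real.rpow_one]
    · simp [hy]
  have hpos : (0:ℝ) < G 1 - G' 1 := by
    simp only [G, G', hG1 q hqpos, hG1 q' hq'pos]
    linarith
  have hdiff : ContinuousAt (fun α => G α - G' α) 1 :=
    (hcont q hqpos).sub (hcont q' hq'pos)
  have hev : ∀ᶠ α in nhds (1:ℝ), 0 < G α - G' α :=
    continuousAt_const.eventually_lt hdiff hpos
  rw [Metric.eventually_nhds_iff] at hev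
  obtain ⟨δ, hδ, hball⟩ := hev
  refine ⟨max (1 - δ) (1/2), ⟨lt_of_lt_of_le (by norm_num) (le_max_right _ _),
    max_lt (by linarith) (by norm_num)⟩, ?_⟩
  intro α hα₀ hα1
  have hαpos : 0 < α := by have h2 := le_max_right (1-δ) ((1:ℝ)/2); linarith
  have h1δ : 1 - δ < α := lt_of_le_of_lt (le_max_left _ _) hα₀
  have hdist : dist α 1 < δ := by
    rw [Real.dist_eq, abs_of_nonpos (by linarith)]; linarith
  have hgt : 0 < G α - G' α := hball hdist
  have hFG : ∀ (r : Y → ℝ),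
      (∑ y, r y ^ α * p y ^ (1 - α))
        = ∑ y, (if 0 < p y then r y ^ α * p y ^ (1 - α) else 0) := by
    intro r
    refine Finset.sum_congr rfl fun y _ => ?_
    by_cases hy : 0 < p y
    · simp [hy]
    · have : p y = 0 := le_antisymm (not_lt.mp hy) (hpnn y)
      simp [hy, this, Real.zero_rpow (by linarith : (1:ℝ) - α ≠ 0)]
  have hc : 0 < α * (1 - α) := mul_pos hαpos (by linarith)
  rw [div_lt_div_iff_of_pos_right hc, hFG q, hFG q']
  have := hgt
  simp only [G, G'] at this
  linarith
end

section
/- Let t be a real number with t > 0, and for α ∈ (0,1) define f_α(t) := (t^α − α·t − (1 − α))/(α·(α − 1)). Then f_α(t) tends to t·log t − t + 1 as α tends to 1 from the left within (0,1), and f_α(t) tends to t − 1 − log t as α tends to 0 from the right within (0,1). -/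
open Filter Topology

private lemma lhop_aux {g h : ℝ → ℝ} {a g' h' : ℝ}
    (hg : HasDerivAt g g' a) (hh : HasDerivAt h h' a)
    (hga : g a = 0) (hha : h a = 0) (hh' : h' ≠ 0) :
    Tendsto (fun x => g x / h x) (𝓝[≠] a) (𝓝 (g' / h')) := by
  rw [hasDerivAt_iff_tendsto_slope] at hg hh
  refine (hg.div hh hh').congr' ?_
  filter_upwards [self_mem_nhdsWithin] with x hx
  have hxa : x - a ≠ 0 := sub_ne_zero.2 hx
  rw [Pi.div_apply, slope_def_field, slope_def_field, hga, hha, sub_zero, sub_zero,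
    div_div_div_cancel_right₀ hxa]

/-- For fixed `t > 0`, the α-divergence generator `f_α(t)` tends to
the reverse-KL generator `t·log t − t + 1` as `α → 1⁻` within `(0,1)`, and to the
forward-KL generator `t − 1 − log t` as `α → 0⁺` within `(0,1)`. -/
theorem stmt_17 (t : ℝ) (ht : 0 < t) :
    Tendsto (fun α : ℝ => (t ^ α - α * t - (1 - α)) / (α * (α - 1)))
      (𝓝[Set.Ioo (0 : ℝ) 1] 1) (𝓝 (t * Real.log t - t + 1))
    ∧ Tendsto (fun α : ℝ => (t ^ α - α * t - (1 - α)) / (α * (α - 1)))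
      (𝓝[Set.Ioo (0 : ℝ) 1] 0) (𝓝 (t - 1 - Real.log t)) := by
  have hg : ∀ a : ℝ, HasDerivAt (fun α : ℝ => t ^ α - α * t - (1 - α))
      (t ^ a * Real.log t - t + 1) a := by
    intro a
    have h1 := (Real.hasStrictDerivAt_const_rpow ht a).hasDerivAt
    have h2 : HasDerivAt (fun α : ℝ => α * t) t a := hasDerivAt_mul_const t
    have h3 : HasDerivAt (fun α : ℝ => 1 - α) (-1) a := by
      simpa using (hasDerivAt_id a).const_sub 1
    have := (h1.sub h2).sub h3
    exact this.congr_deriv (by ring)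
  have hh : ∀ a : ℝ, HasDerivAt (fun α : ℝ => α * (α - 1)) (2 * a - 1) a := by
    intro a
    have := ((hasDerivAt_id a).mul ((hasDerivAt_id a).sub_const 1))
    exact this.congr_deriv (by simp; ring)
  constructor
  · have h1 : Tendsto (fun α : ℝ => (t ^ α - α * t - (1 - α)) / (α * (α - 1)))
        (𝓝[≠] (1:ℝ)) (𝓝 ((t ^ (1:ℝ) * Real.log t - t + 1) / (2 * 1 - 1))) := by
      refine lhop_aux (hg 1) (hh 1) ?_ ?_ ?_ <;> norm_num [Real.rpow_one]
    have h2 : (t ^ (1:ℝ) * Real.log t - t + 1) / (2 * 1 - 1)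
        = t * Real.log t - t + 1 := by
      rw [Real.rpow_one]; ring
    rw [h2] at h1
    exact h1.mono_left (nhdsWithin_mono _ (fun x hx => ne_of_lt hx.2))
  · have h1 : Tendsto (fun α : ℝ => (t ^ α - α * t - (1 - α)) / (α * (α - 1)))
        (𝓝[≠] (0:ℝ)) (𝓝 ((t ^ (0:ℝ) * Real.log t - t + 1) / (2 * 0 - 1))) := by
      refine lhop_aux (hg 0) (hh 0) ?_ ?_ ?_ <;> norm_num [Real.rpow_zero]
    have h2 : (t ^ (0:ℝ) * Real.log t - t + 1) / (2 * 0 - 1)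
        = t - 1 - Real.log t := by
      rw [Real.rpow_zero]; ring
    rw [h2] at h1
    exact h1.mono_left (nhdsWithin_mono _ (fun x hx => ne_of_gt hx.1))
end
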